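/- There is a universal constant c > 0 such that for all sufficiently large n and every h ∈ {0,1}^n, with L = ⌊2^{n/2}/100⌋, a snake X drawn from the snake distribution D_{h,L} on {0,1}^n is c-sparse with probability at least 1 − n²·2^{−n}. -/

import Mathlib

/-- Flip bit `t mod n` of a vertex of the Boolean hypercube `{0,1}^n`. -/
def flipBitHC {n : ℕ} (x : Fin n → Bool) (t : ℕ) : Fin n → Bool :=
  fun i => if (i : ℕ) = t % n then !(x i) else x i

/-- The coordinate-loop process on `{0,1}^n` started at `h`, driven by coin flips `b`. -/
def coordLoop {n : ℕ} (h : Fin n → Bool) (b : ℕ → Bool) : ℕ → (Fin n → Bool)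
  | 0 => h
  | t + 1 => if b t then flipBitHC (coordLoop h b t) t else coordLoop h b t

/-- Extend a finite string of coin flips to an infinite one (by `false`). -/
def extBits {s : ℕ} (ω : Fin s → Bool) : ℕ → Bool :=
  fun t => if ht : t < s then ω ⟨t, ht⟩ else false

/-- `delta n x v i` is the smallest `k` such that `x` agrees with `v` on every
coordinate outside `{i, i-1, …, i-k+1}` (indices mod `n`). -/
noncomputable def delta {α : Type*} (n : ℕ) (x v : Fin n → α) (i : ℕ) : ℕ :=
  sInf {k | ∀ j : Fin n, (∀ l < k, (j : ℕ) ≠ (i + n - l) % n) → x j = v j}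

/-- A snake `x_0, …, x_{L-1}` in `{0,1}^n` is `c`-sparse if for every vertex `v` and
every `k ≤ n`, `|{t < L : Δ(x_t, v, t mod n) = k}| ≤ c·n·(n + L/2^{n-k})`. -/
noncomputable def IsSparse (c : ℝ) (n L : ℕ) (x : ℕ → Fin n → Bool) : Prop :=
  ∀ v : Fin n → Bool, ∀ k ≤ n,
    (((Finset.range L).filter (fun t => delta n (x t) v (t % n) = k)).card : ℝ)
      ≤ c * n * (n + (L : ℝ) / 2 ^ (n - k))

/-- Probability of an event on a finite sample space, under the uniform distribution. -/
noncomputable def unifPr {Ω : Type*} [Fintype Ω] (P : Ω → Prop) : ℝ :=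
  (Nat.card {ω : Ω // P ω} : ℝ) / (Fintype.card Ω : ℝ)

open Finset

/-! ### Auxiliary machinery -/

/-- Parity formula for the coordinate-loop process. -/
lemma coordLoop_apply {n : ℕ} (h : Fin n → Bool) (b : ℕ → Bool) (t : ℕ) (j : Fin n) :
    coordLoop h b t j =
      xor (Nat.bodd (((Finset.range t).filter
        (fun s => s % n = (j : ℕ) ∧ b s = true)).card)) (h j) := by
  induction t with
  | zero => simp [coordLoop]
  | succ t ih =>
    rw [Finset.range_add_one, Finset.filter_insert]
    by_cases hb : b t = true
    · by_cases hj : t % n = (j : ℕ)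
      · rw [if_pos ⟨hj, hb⟩, Finset.card_insert_of_notMem (by simp)]
        have hx : coordLoop h b (t + 1) j = !(coordLoop h b t j) := by
          simp [coordLoop, hb, flipBitHC, hj]
        rw [hx, ih, Nat.bodd_succ]
        cases Nat.bodd ((Finset.range t).filter
          (fun s => s % n = (j : ℕ) ∧ b s = true)).card <;> cases h j <;> rfl
      · rw [if_neg (by simp [hj])]
        have hx : coordLoop h b (t + 1) j = coordLoop h b t j := by
          simp only [coordLoop, hb, if_true, flipBitHC]
          rw [if_neg (fun hh => hj hh.symm)]
        rw [hx, ih]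
    · rw [if_neg (by simp [hb])]
      have hx : coordLoop h b (t + 1) j = coordLoop h b t j := by
        simp [coordLoop, hb]
      rw [hx, ih]

lemma delta_prop {α : Type*} {n : ℕ} (hn : 0 < n) (x v : Fin n → α) (i k : ℕ)
    (hk : delta n x v i ≤ k) :
    ∀ j : Fin n, (∀ l < k, (j : ℕ) ≠ (i + n - l) % n) → x j = v j := by
  have hne : n ∈ {k | ∀ j : Fin n, (∀ l < k, (j : ℕ) ≠ (i + n - l) % n) → x j = v j} := by
    intro j hj
    exfalso
    have hjn : (j : ℕ) < n := j.isLt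
    have h2 := Nat.div_add_mod (i + n - (j : ℕ)) n
    refine hj ((i + n - (j : ℕ)) % n) (Nat.mod_lt _ hn) ?_
    have h3 : i + n - (i + n - (j : ℕ)) % n = (j : ℕ) + n * ((i + n - (j : ℕ)) / n) := by
      omega
    rw [h3, Nat.add_mul_mod_self_left, Nat.mod_eq_of_lt hjn]
  have hmem : delta n x v i ∈
      {k | ∀ j : Fin n, (∀ l < k, (j : ℕ) ≠ (i + n - l) % n) → x j = v j} :=
    Nat.sInf_mem ⟨n, hne⟩
  intro j hj
  exact hmem j (fun l hl => hj l (lt_of_lt_of_le hl hk))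

/-- Coordinates outside the window of length `k` ending at `r`. -/
def winA (n r k : ℕ) : Finset (Fin n) :=
  Finset.univ.filter (fun j => ∀ l < k, (j : ℕ) ≠ (r + n - l) % n)

lemma card_winA {n r k : ℕ} (hn : 0 < n) (hk : k ≤ n) : (winA n r k).card = n - k := by
  classical
  have himg : (winA n r k)ᶜ =
      (Finset.range k).image (fun l => (⟨(r + n - l) % n, Nat.mod_lt _ hn⟩ : Fin n)) := by
    ext j
    simp only [winA, Finset.mem_compl, Finset.mem_filter, Finset.mem_univ, true_and,
      Finset.mem_image, Finset.mem_range, Fin.ext_iff]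
    push_neg
    constructor
    · rintro ⟨l, hl, he⟩; exact ⟨l, hl, he.symm⟩
    · rintro ⟨l, hl, he⟩; exact ⟨l, hl, he.symm⟩
  have hinj : Set.InjOn (fun l => (⟨(r + n - l) % n, Nat.mod_lt _ hn⟩ : Fin n))
      (Finset.range k) := by
    intro a ha b hb hab
    simp only [Finset.coe_range, Set.mem_Iio] at ha hb
    simp only [Fin.mk.injEq] at hab
    rcases le_total a b with hle | hle
    · have h1 : r + n - b ≤ r + n - a := by omega
      have hd : n ∣ (r + n - a) - (r + n - b) := (Nat.modEq_iff_dvd' h1).1 hab.symm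
      have h2 : (r + n - a) - (r + n - b) = b - a := by omega
      rw [h2] at hd
      have := Nat.eq_zero_of_dvd_of_lt hd
      omega
    · have h1 : r + n - a ≤ r + n - b := by omega
      have hd : n ∣ (r + n - b) - (r + n - a) := (Nat.modEq_iff_dvd' h1).1 hab
      have h2 : (r + n - b) - (r + n - a) = a - b := by omega
      rw [h2] at hd
      have := Nat.eq_zero_of_dvd_of_lt hd
      omega
  have h1 : ((winA n r k)ᶜ).card = k := by
    rw [himg, Finset.card_image_of_injOn hinj, Finset.card_range]
  have h2 := Finset.card_compl (winA n r k)
  rw [h1] at h2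
  simp only [Fintype.card_fin] at h2
  have h3 : (winA n r k).card ≤ n := by
    have := (winA n r k).card_le_univ
    simpa using this
  omega

/-- The last time before `t` at which coordinate `j` was touched. -/
def pivFn (n t j : ℕ) : ℕ := t - n + (j + n - t % n) % n

lemma pivFn_lt {n t j : ℕ} (hn : 0 < n) (ht : n ≤ t) : pivFn n t j < t := by
  have := Nat.mod_lt (j + n - t % n) hn
  unfold pivFn; omega

lemma pivFn_ge {n t j : ℕ} : t - n ≤ pivFn n t j := Nat.le_add_right _ _

lemma pivFn_mod {n t j : ℕ} (hn : 0 < n) (ht : n ≤ t) (hj : j < n) : pivFn n t j % n = j := by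
  unfold pivFn
  rw [Nat.add_mod, ← Nat.mod_eq_sub_mod ht, Nat.mod_mod_of_dvd _ dvd_rfl, Nat.add_mod_mod]
  have h1 : t % n + (j + n - t % n) = j + n := by
    have := Nat.mod_lt t hn
    omega
  rw [h1, Nat.add_mod_right, Nat.mod_eq_of_lt hj]

lemma pivFn_max {n t j s : ℕ} (hn : 0 < n) (ht : n ≤ t) (hj : j < n)
    (hs : s % n = j) (hst : s < t) (hne : s ≠ pivFn n t j) : s < pivFn n t j := by
  by_contra hlt
  push_neg at hlt
  have h1 : pivFn n t j < s := lt_of_le_of_ne hlt (Ne.symm hne)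
  have hpm := pivFn_mod (t := t) (j := j) hn ht hj
  have h2 : n ∣ s - pivFn n t j := by
    refine (Nat.modEq_iff_dvd' h1.le).1 ?_
    show pivFn n t j % n = s % n
    rw [hpm, hs]
  have h3 : s - pivFn n t j < n := by
    have := pivFn_ge (n := n) (t := t) (j := j)
    omega
  have := Nat.eq_zero_of_dvd_of_lt h2
  omega

/-- Core injectivity: coins off the pivot set determine everything, given the events. -/
lemma core_inj {n L k r : ℕ} (hn : 0 < n) (h v : Fin n → Bool)
    (S : Finset ℕ) (hS : ∀ t ∈ S, n ≤ t ∧ t < L ∧ t % n = r)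
    (P : Finset ℕ)
    (hP : P = S.biUnion (fun t => (winA n r k).image (fun j : Fin n => pivFn n t (j : ℕ))))
    (ω ω' : Fin L → Bool)
    (hω : ∀ t ∈ S, ∀ j ∈ winA n r k, coordLoop h (extBits ω) t j = v j)
    (hω' : ∀ t ∈ S, ∀ j ∈ winA n r k, coordLoop h (extBits ω') t j = v j)
    (hagree : ∀ s : Fin L, (s : ℕ) ∉ P → ω s = ω' s) :
    ω = ω' := by
  suffices hsuff : ∀ p, extBits ω p = extBits ω' p by
    funext s
    have := hsuff (s : ℕ)
    simpa [extBits, s.isLt] using this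
  intro p
  induction p using Nat.strong_induction_on with
  | _ p IH =>
  by_cases hpL : p < L
  swap
  · simp [extBits, hpL]
  by_cases hpP : p ∈ P
  swap
  · have := hagree ⟨p, hpL⟩ hpP
    simpa [extBits, hpL] using this
  · rw [hP] at hpP
    rw [Finset.mem_biUnion] at hpP
    obtain ⟨t, htS, hpmem⟩ := hpP
    rw [Finset.mem_image] at hpmem
    obtain ⟨j, hjA, hpj⟩ := hpmem
    obtain ⟨htn, htL, htr⟩ := hS t htS
    have e1 := hω t htS j hjA
    have e2 := hω' t htS j hjA
    rw [coordLoop_apply] at e1 e2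
    have epar : Nat.bodd ((Finset.filter (fun s => s % n = (j : ℕ) ∧ extBits ω s = true)
          (Finset.range t)).card)
        = Nat.bodd ((Finset.filter (fun s => s % n = (j : ℕ) ∧ extBits ω' s = true)
          (Finset.range t)).card) := by
      have h12 := e1.trans e2.symm
      cases hc : h j <;> rw [hc] at h12 <;>
        simpa using h12
    have hpmod : p % n = (j : ℕ) := by rw [← hpj]; exact pivFn_mod hn htn j.isLt
    have hplt : p < t := by rw [← hpj]; exact pivFn_lt hn htn
    have hmax : ∀ s, s % n = (j : ℕ) → s < t → s ≠ p → s < p := by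
      intro s h1 h2 h3
      rw [← hpj]
      exact pivFn_max hn htn j.isLt h1 h2 (by rw [hpj]; exact h3)
    have hins : Finset.range t = insert p ((Finset.range t).erase p) :=
      (Finset.insert_erase (Finset.mem_range.2 hplt)).symm
    have herase : ((Finset.range t).erase p).filter
          (fun s => s % n = (j : ℕ) ∧ extBits ω s = true)
        = ((Finset.range t).erase p).filter
          (fun s => s % n = (j : ℕ) ∧ extBits ω' s = true) := by
      apply Finset.filter_congr
      intro s hsmem
      rw [Finset.mem_erase, Finset.mem_range] at hsmem
      by_cases hsj : s % n = (j : ℕ)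
      · have hsp : s < p := hmax s hsj hsmem.2 hsmem.1
        rw [IH s hsp]
      · simp [hsj]
    have hdecomp : ∀ b : ℕ → Bool,
        ((Finset.range t).filter (fun s => s % n = (j : ℕ) ∧ b s = true)).card
          = (((Finset.range t).erase p).filter
              (fun s => s % n = (j : ℕ) ∧ b s = true)).card + (if b p = true then 1 else 0) := by
      intro b
      conv_lhs => rw [hins]
      rw [Finset.filter_insert]
      by_cases hbp : b p = true
      · rw [if_pos ⟨hpmod, hbp⟩, Finset.card_insert_of_notMem (by simp), if_pos hbp]
      · rw [if_neg (by simp [hbp]), if_neg hbp, Nat.add_zero]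
    rw [hdecomp (extBits ω), hdecomp (extBits ω'), herase] at epar
    cases hx : extBits ω p <;> cases hy : extBits ω' p
    · rfl
    · exfalso; rw [hx, hy] at epar; simp [Nat.bodd_add] at epar
    · exfalso; rw [hx, hy] at epar; simp [Nat.bodd_add] at epar
    · rfl

/-- Counting: the number of coin sequences realizing all events of `S` is small. -/
lemma countS {n L k r : ℕ} (hn : 0 < n) (hk : k < n) (h v : Fin n → Bool)
    (S : Finset ℕ) (hS : ∀ t ∈ S, n ≤ t ∧ t < L ∧ t % n = r) :
    (Finset.univ.filter (fun ω : Fin L → Bool =>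
        ∀ t ∈ S, ∀ j ∈ winA n r k, coordLoop h (extBits ω) t j = v j)).card
      * 2 ^ (S.card * (n - k)) ≤ 2 ^ L := by
  classical
  set P := S.biUnion (fun t => (winA n r k).image (fun j : Fin n => pivFn n t (j : ℕ)))
    with hPdef
  have hPsub : P ⊆ Finset.range L := by
    intro p hp
    simp only [hPdef, Finset.mem_biUnion, Finset.mem_image] at hp
    obtain ⟨t, htS, j, hjA, hpj⟩ := hp
    obtain ⟨htn, htL, _⟩ := hS t htS
    have := pivFn_lt (n := n) (t := t) (j := (j : ℕ)) hn htn
    rw [Finset.mem_range]; omega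
  have hPcard : P.card = S.card * (n - k) := by
    rw [hPdef, Finset.card_biUnion]
    · rw [Finset.sum_congr rfl (fun t ht => ?_), Finset.sum_const, smul_eq_mul]
      obtain ⟨htn, _, _⟩ := hS t ht
      rw [Finset.card_image_of_injOn, card_winA hn hk.le]
      intro a _ b _ hab
      have h1 := pivFn_mod (n := n) (t := t) hn htn a.isLt
      have h2 := pivFn_mod (n := n) (t := t) hn htn b.isLt
      apply Fin.ext
      simp only at hab
      rw [← h1, ← h2, hab]
    · intro t ht t' ht' hne
      rw [Function.onFun, Finset.disjoint_left]
      intro p hp hp'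
      rw [Finset.mem_image] at hp hp'
      obtain ⟨j, hjA, hpj⟩ := hp
      obtain ⟨j', hj'A, hpj'⟩ := hp'
      obtain ⟨htn, htL, htr⟩ := hS t ht
      obtain ⟨ht'n, ht'L, ht'r⟩ := hS t' ht'
      have l1 : p < t := by rw [← hpj]; exact pivFn_lt hn htn
      have l2 : t - n ≤ p := by rw [← hpj]; exact pivFn_ge
      have l3 : p < t' := by rw [← hpj']; exact pivFn_lt hn ht'n
      have l4 : t' - n ≤ p := by rw [← hpj']; exact pivFn_ge
      have hmod : t % n = t' % n := by rw [htr, ht'r]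
      rcases lt_or_gt_of_ne hne with hlt | hlt
      · have hd : n ∣ t' - t := (Nat.modEq_iff_dvd' hlt.le).1 hmod
        have := Nat.le_of_dvd (by omega) hd
        omega
      · have hd : n ∣ t - t' := (Nat.modEq_iff_dvd' hlt.le).1 hmod.symm
        have := Nat.le_of_dvd (by omega) hd
        omega
  have hQ : Fintype.card {s : Fin L // (s : ℕ) ∈ P} = P.card := by
    rw [Fintype.card_subtype]
    refine Finset.card_bij (fun s _ => (s : ℕ)) ?_ ?_ ?_
    · intro a ha; rw [Finset.mem_filter] at ha; exact ha.2
    · intro a _ b _ hab; exact Fin.ext hab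
    · intro p hp
      have hpL : p < L := Finset.mem_range.1 (hPsub hp)
      exact ⟨⟨p, hpL⟩, Finset.mem_filter.2 ⟨Finset.mem_univ _, hp⟩, rfl⟩
  set T := Finset.univ.filter (fun ω : Fin L → Bool =>
      ∀ t ∈ S, ∀ j ∈ winA n r k, coordLoop h (extBits ω) t j = v j) with hT
  have hinj : Function.Injective
      (fun (z : {ω // ω ∈ T} × ({s : Fin L // (s : ℕ) ∈ P} → Bool)) =>
        (fun s : Fin L => if hs : (s : ℕ) ∈ P then z.2 ⟨s, hs⟩ else (z.1 : Fin L → Bool) s)) := by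
    rintro ⟨⟨ω, hωT⟩, g⟩ ⟨⟨ω', hω'T⟩, g'⟩ hz
    simp only at hz
    have hgg : g = g' := by
      funext s
      have := congrFun hz s.1
      rwa [dif_pos s.2, dif_pos s.2] at this
    have hag : ∀ s : Fin L, (s : ℕ) ∉ P → ω s = ω' s := by
      intro s hs
      have := congrFun hz s
      rwa [dif_neg hs, dif_neg hs] at this
    have hωE : ∀ t ∈ S, ∀ j ∈ winA n r k, coordLoop h (extBits ω) t j = v j :=
      (Finset.mem_filter.1 hωT).2
    have hω'E : ∀ t ∈ S, ∀ j ∈ winA n r k, coordLoop h (extBits ω') t j = v j :=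
      (Finset.mem_filter.1 hω'T).2
    have heq : ω = ω' := core_inj hn h v S hS P hPdef ω ω' hωE hω'E hag
    subst heq
    subst hgg
    rfl
  have hcardle := Fintype.card_le_of_injective _ hinj
  have h1 : Fintype.card ({ω // ω ∈ T} × ({s : Fin L // (s : ℕ) ∈ P} → Bool))
      = T.card * 2 ^ (S.card * (n - k)) := by
    rw [Fintype.card_prod, Fintype.card_coe, Fintype.card_fun, hQ, hPcard]
    norm_num
  have h2 : Fintype.card (Fin L → Bool) = 2 ^ L := by
    rw [Fintype.card_fun]
    norm_num
  rw [h1, h2] at hcardle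
  exact hcardle

/-- Binomial union bound within one residue class. -/
lemma classBound {n L k r m : ℕ} (hn : 0 < n) (hk : k < n) (h v : Fin n → Bool) :
    (Finset.univ.filter (fun ω : Fin L → Bool =>
        m ≤ ((((Finset.range L).filter (fun t => n ≤ t ∧ t % n = r)).filter
          (fun t => ∀ j ∈ winA n r k, coordLoop h (extBits ω) t j = v j)).card))).card
      * 2 ^ (m * (n - k))
      ≤ (((Finset.range L).filter (fun t => n ≤ t ∧ t % n = r)).card).choose m * 2 ^ L := by
  classical
  set CT := (Finset.range L).filter (fun t => n ≤ t ∧ t % n = r) with hCT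
  have hsub : (Finset.univ.filter (fun ω : Fin L → Bool =>
        m ≤ ((CT.filter (fun t => ∀ j ∈ winA n r k, coordLoop h (extBits ω) t j = v j)).card)))
      ⊆ (CT.powersetCard m).biUnion (fun S => Finset.univ.filter (fun ω : Fin L → Bool =>
        ∀ t ∈ S, ∀ j ∈ winA n r k, coordLoop h (extBits ω) t j = v j)) := by
    intro ω hω
    rw [Finset.mem_filter] at hω
    obtain ⟨S, hSsub, hScard⟩ := Finset.exists_subset_card_eq hω.2
    rw [Finset.mem_biUnion]
    refine ⟨S, Finset.mem_powersetCard.2 ⟨hSsub.trans (Finset.filter_subset _ _), hScard⟩, ?_⟩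
    rw [Finset.mem_filter]
    refine ⟨Finset.mem_univ _, fun t ht => ?_⟩
    exact (Finset.mem_filter.1 (hSsub ht)).2
  calc (Finset.univ.filter (fun ω : Fin L → Bool =>
        m ≤ ((CT.filter (fun t => ∀ j ∈ winA n r k, coordLoop h (extBits ω) t j = v j)).card))).card
      * 2 ^ (m * (n - k))
      ≤ ((CT.powersetCard m).biUnion (fun S => Finset.univ.filter (fun ω : Fin L → Bool =>
          ∀ t ∈ S, ∀ j ∈ winA n r k, coordLoop h (extBits ω) t j = v j))).card
        * 2 ^ (m * (n - k)) :=
      Nat.mul_le_mul_right _ (Finset.card_le_card hsub)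
    _ ≤ (∑ S ∈ CT.powersetCard m, (Finset.univ.filter (fun ω : Fin L → Bool =>
          ∀ t ∈ S, ∀ j ∈ winA n r k, coordLoop h (extBits ω) t j = v j)).card)
        * 2 ^ (m * (n - k)) :=
      Nat.mul_le_mul_right _ (Finset.card_biUnion_le)
    _ = ∑ S ∈ CT.powersetCard m, (Finset.univ.filter (fun ω : Fin L → Bool =>
          ∀ t ∈ S, ∀ j ∈ winA n r k, coordLoop h (extBits ω) t j = v j)).card
        * 2 ^ (m * (n - k)) := Finset.sum_mul _ _ _
    _ ≤ ∑ _S ∈ CT.powersetCard m, 2 ^ L := by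
      refine Finset.sum_le_sum (fun S hSmem => ?_)
      rw [Finset.mem_powersetCard] at hSmem
      obtain ⟨hSsub, hScard⟩ := hSmem
      have hS : ∀ t ∈ S, n ≤ t ∧ t < L ∧ t % n = r := by
        intro t ht
        have := hSsub ht
        rw [hCT, Finset.mem_filter, Finset.mem_range] at this
        exact ⟨this.2.1, this.1, this.2.2⟩
      have := countS hn hk h v S hS
      rw [hScard] at this
      exact this
    _ = CT.card.choose m * 2 ^ L := by
      rw [Finset.sum_const, smul_eq_mul, Finset.card_powersetCard]

lemma CT_card_le {n L r : ℕ} (hn : 0 < n) :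
    ((Finset.range L).filter (fun t => n ≤ t ∧ t % n = r)).card ≤ L / n := by
  classical
  have hmap : ∀ t ∈ (Finset.range L).filter (fun t => n ≤ t ∧ t % n = r),
      t / n ∈ Finset.Icc 1 (L / n) := by
    intro t ht
    rw [Finset.mem_filter, Finset.mem_range] at ht
    rw [Finset.mem_Icc]
    constructor
    · rw [Nat.one_le_div_iff hn]; exact ht.2.1
    · exact Nat.div_le_div_right ht.1.le
  calc ((Finset.range L).filter (fun t => n ≤ t ∧ t % n = r)).card
      ≤ (Finset.Icc 1 (L / n)).card := by
        refine Finset.card_le_card_of_injOn (fun t => t / n) hmap ?_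
        intro a ha b hb hab
        rw [Finset.coe_filter] at ha hb
        obtain ⟨haL, _, har⟩ := ha
        obtain ⟨hbL, _, hbr⟩ := hb
        have h1 := Nat.div_add_mod a n
        have h2 := Nat.div_add_mod b n
        simp only at hab
        have h3 : n * (a / n) = n * (b / n) := by rw [hab]
        omega
    _ = L / n := by simp

lemma succ_pow_le_three_mul_pow (m : ℕ) : ((m : ℝ) + 1) ^ m ≤ 3 * (m : ℝ) ^ m := by
  rcases Nat.eq_zero_or_pos m with rfl | hm
  · norm_num
  have hm' : (0 : ℝ) < m := by exact_mod_cast hm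
  have h1 : ((m : ℝ) + 1) = (m : ℝ) * (1 + 1 / m) := by
    field_simp
  have h2 : (1 + 1 / (m : ℝ)) ^ m ≤ Real.exp 1 := by
    have h3 : (1 + 1 / (m : ℝ)) ≤ Real.exp (1 / m) := by
      have := Real.add_one_le_exp (1 / (m : ℝ))
      linarith
    calc (1 + 1 / (m : ℝ)) ^ m ≤ (Real.exp (1 / m)) ^ m := by
          apply pow_le_pow_left₀ (by positivity) h3
      _ = Real.exp 1 := by
          rw [← Real.exp_nat_mul]
          congr 1
          field_simp
  have h4 : Real.exp 1 ≤ 3 := by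
    have := Real.exp_one_lt_d9
    linarith
  calc ((m : ℝ) + 1) ^ m = (m : ℝ) ^ m * (1 + 1 / m) ^ m := by
        rw [h1, mul_pow]
    _ ≤ (m : ℝ) ^ m * 3 := by
        apply mul_le_mul_of_nonneg_left (h2.trans h4) (by positivity)
    _ = 3 * (m : ℝ) ^ m := by ring

lemma pow_self_le_three_pow_mul_factorial : ∀ m : ℕ, (m : ℝ) ^ m ≤ 3 ^ m * (Nat.factorial m) := by
  intro m
  induction m with
  | zero => norm_num
  | succ m ih =>
    have h1 : ((m : ℝ) + 1) ^ (m + 1) = ((m : ℝ) + 1) ^ m * ((m : ℝ) + 1) := by ring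
    have h2 : ((m + 1 : ℕ) : ℝ) = (m : ℝ) + 1 := by push_cast; ring
    rw [h2, h1]
    have h3 := succ_pow_le_three_mul_pow m
    have h4 : ((m : ℝ) + 1) ^ m * ((m : ℝ) + 1) ≤ 3 * (m : ℝ) ^ m * ((m : ℝ) + 1) := by
      apply mul_le_mul_of_nonneg_right h3 (by positivity)
    refine h4.trans ?_
    have h5 : (Nat.factorial (m + 1) : ℝ) = ((m : ℝ) + 1) * Nat.factorial m := by
      rw [Nat.factorial_succ]; push_cast; ring
    rw [h5, pow_succ]
    have h6 : (m : ℝ) ^ m * ((m : ℝ) + 1) ≤ (3 ^ m * Nat.factorial m) * ((m : ℝ) + 1) := by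
      apply mul_le_mul_of_nonneg_right ih (by positivity)
    calc 3 * (m : ℝ) ^ m * ((m : ℝ) + 1) = 3 * ((m : ℝ) ^ m * ((m : ℝ) + 1)) := by ring
      _ ≤ 3 * ((3 ^ m * Nat.factorial m) * ((m : ℝ) + 1)) := by linarith
      _ = 3 ^ m * 3 * (((m : ℝ) + 1) * Nat.factorial m) := by ring

lemma choose_bound {M m n k : ℕ} (hm : n ≤ m) (hm0 : 0 < m)
    (h12 : 12 * M ≤ m * 2 ^ (n - k)) :
    (M.choose m : ℝ) * 4 ^ n ≤ 2 ^ (m * (n - k)) := by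
  have hmR : (0 : ℝ) < m := by exact_mod_cast hm0
  have hchoose : (M.choose m : ℝ) * Nat.factorial m ≤ (M : ℝ) ^ m := by
    have h1 : M.choose m * Nat.factorial m ≤ M ^ m := by
      have := Nat.descFactorial_le_pow M m
      rw [Nat.descFactorial_eq_factorial_mul_choose] at this
      calc M.choose m * Nat.factorial m = Nat.factorial m * M.choose m := Nat.mul_comm _ _
        _ ≤ M ^ m := this
    exact_mod_cast h1
  have hfact := pow_self_le_three_pow_mul_factorial m
  -- choose ≤ (3M/m)^m
  have hch2 : (M.choose m : ℝ) ≤ (3 * M / m) ^ m := by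
    have hfpos : (0 : ℝ) < Nat.factorial m := by exact_mod_cast Nat.factorial_pos m
    have hmm : (0 : ℝ) < (m : ℝ) ^ m := by positivity
    rw [div_pow, le_div_iff₀ hmm]
    calc (M.choose m : ℝ) * (m : ℝ) ^ m ≤ (M.choose m : ℝ) * (3 ^ m * Nat.factorial m) := by
          apply mul_le_mul_of_nonneg_left hfact (by positivity)
      _ = ((M.choose m : ℝ) * Nat.factorial m) * 3 ^ m := by ring
      _ ≤ (M : ℝ) ^ m * 3 ^ m := by
          apply mul_le_mul_of_nonneg_right hchoose (by positivity)
      _ = (3 * M) ^ m := by rw [mul_pow]; ring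
  -- 3M/m ≤ 2^(n-k)/4
  have hq : (3 * (M : ℝ) / m) ≤ 2 ^ (n - k) / 4 := by
    rw [div_le_div_iff₀ hmR (by norm_num)]
    have h12' : (12 : ℝ) * M ≤ m * 2 ^ (n - k) := by exact_mod_cast h12
    linarith
  have hqn : (0 : ℝ) ≤ 3 * (M : ℝ) / m := by positivity
  calc (M.choose m : ℝ) * 4 ^ n ≤ (3 * M / m) ^ m * 4 ^ n := by
        apply mul_le_mul_of_nonneg_right hch2 (by positivity)
    _ ≤ (2 ^ (n - k) / 4) ^ m * 4 ^ n := by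
        apply mul_le_mul_of_nonneg_right (pow_le_pow_left₀ hqn hq m) (by positivity)
    _ = 2 ^ ((n - k) * m) * (4 ^ n / 4 ^ m) := by
        rw [div_pow, pow_mul]
        ring
    _ ≤ 2 ^ ((n - k) * m) * 1 := by
        apply mul_le_mul_of_nonneg_left ?_ (by positivity)
        rw [div_le_one (by positivity)]
        exact pow_le_pow_right₀ (by norm_num) hm
    _ = 2 ^ (m * (n - k)) := by rw [mul_one, Nat.mul_comm]

lemma reduction {n L : ℕ} (hn : 12 ≤ n) (h : Fin n → Bool) (ω : Fin L → Bool)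
    (hbad : ¬ IsSparse 3 n L (coordLoop h (extBits ω))) :
    ∃ v : Fin n → Bool, ∃ k < n, ∃ r < n,
      n + L / 2 ^ (n - k) + 1 ≤
        ((((Finset.range L).filter (fun t => n ≤ t ∧ t % n = r)).filter
          (fun t => ∀ j ∈ winA n r k, coordLoop h (extBits ω) t j = v j)).card) := by
  have hn0 : 0 < n := by omega
  simp only [IsSparse] at hbad
  push_neg at hbad
  obtain ⟨v, k, hkn, hgt⟩ := hbad
  refine ⟨v, ?_⟩
  have hkln : k < n := by
    by_contra hkge
    have hkeq : k = n := le_antisymm hkn (le_of_not_gt hkge)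
    rw [hkeq, Nat.sub_self] at hgt
    norm_num at hgt
    have hcard : (((Finset.range L).filter
        (fun t => delta n (coordLoop h (extBits ω) t) v (t % n) = n)).card : ℝ) ≤ L := by
      have h1 : ((Finset.range L).filter
          (fun t => delta n (coordLoop h (extBits ω) t) v (t % n) = n)).card ≤ L := by
        calc ((Finset.range L).filter _).card ≤ (Finset.range L).card :=
            Finset.card_filter_le _ _
          _ = L := Finset.card_range L
      exact_mod_cast h1
    have hnR : (1 : ℝ) ≤ n := by exact_mod_cast hn0
    have hLR : (0 : ℝ) ≤ L := by positivity
    nlinarith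
  refine ⟨k, hkln, ?_⟩
  by_contra hcon
  push_neg at hcon
  set D := (Finset.range L).filter
    (fun t => delta n (coordLoop h (extBits ω) t) v (t % n) = k) with hD
  have hsub : D ⊆ (Finset.range n) ∪ (Finset.range n).biUnion (fun r =>
      (((Finset.range L).filter (fun t => n ≤ t ∧ t % n = r)).filter
        (fun t => ∀ j ∈ winA n r k, coordLoop h (extBits ω) t j = v j))) := by
    intro t ht
    rw [hD, Finset.mem_filter, Finset.mem_range] at ht
    by_cases htn : t < n
    · exact Finset.mem_union_left _ (Finset.mem_range.2 htn)
    · push_neg at htn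
      refine Finset.mem_union_right _ (Finset.mem_biUnion.2
        ⟨t % n, Finset.mem_range.2 (Nat.mod_lt _ hn0), ?_⟩)
      rw [Finset.mem_filter]
      refine ⟨Finset.mem_filter.2 ⟨Finset.mem_range.2 ht.1, htn, rfl⟩, ?_⟩
      intro j hj
      simp only [winA, Finset.mem_filter, Finset.mem_univ, true_and] at hj
      exact delta_prop hn0 _ _ _ k (le_of_eq ht.2) j hj
  have hcardD : D.card ≤ n + n * (n + L / 2 ^ (n - k)) := by
    calc D.card ≤ ((Finset.range n) ∪ (Finset.range n).biUnion _).card :=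
        Finset.card_le_card hsub
      _ ≤ (Finset.range n).card + ((Finset.range n).biUnion _).card :=
        Finset.card_union_le _ _
      _ ≤ n + ∑ r ∈ Finset.range n,
          ((((Finset.range L).filter (fun t => n ≤ t ∧ t % n = r)).filter
            (fun t => ∀ j ∈ winA n r k, coordLoop h (extBits ω) t j = v j)).card) := by
          rw [Finset.card_range]
          exact Nat.add_le_add_left Finset.card_biUnion_le _
      _ ≤ n + ∑ _r ∈ Finset.range n, (n + L / 2 ^ (n - k)) := by
          refine Nat.add_le_add_left (Finset.sum_le_sum (fun r hr => ?_)) _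
          have := hcon r (Finset.mem_range.1 hr)
          omega
      _ = n + n * (n + L / 2 ^ (n - k)) := by
          rw [Finset.sum_const, Finset.card_range, smul_eq_mul]
  -- contradiction in ℝ
  have hQle : ((L / 2 ^ (n - k) : ℕ) : ℝ) ≤ (L : ℝ) / 2 ^ (n - k) := by
    have := Nat.cast_div_le (m := L) (n := 2 ^ (n - k)) (α := ℝ)
    simpa [Nat.cast_pow] using this
  have hQ0 : (0 : ℝ) ≤ ((L / 2 ^ (n - k) : ℕ) : ℝ) := by positivity
  have hq0 : (0 : ℝ) ≤ (L : ℝ) / 2 ^ (n - k) := by positivity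
  have hnR : (1 : ℝ) ≤ n := by exact_mod_cast hn0
  have hDR : (D.card : ℝ) ≤ n + n * (n + ((L / 2 ^ (n - k) : ℕ) : ℝ)) := by
    exact_mod_cast hcardD
  have hfin : (D.card : ℝ) ≤ 3 * n * (n + (L : ℝ) / 2 ^ (n - k)) := by
    nlinarith
  rw [hD] at hfin
  linarith

theorem stmt_9 :
    ∃ c > (0 : ℝ), ∃ n₀ : ℕ, ∀ n, n₀ ≤ n → ∀ h : Fin n → Bool,
      ∀ L : ℕ, L = ⌊(2 : ℝ) ^ ((n : ℝ) / 2) / 100⌋₊ →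
        1 - (n : ℝ) ^ 2 / 2 ^ n
          ≤ unifPr (fun ω : Fin L → Bool => IsSparse c n L (coordLoop h (extBits ω))) := by
  classical
  refine ⟨3, by norm_num, 12, ?_⟩
  intro n hn h L _
  have hn0 : 0 < n := by omega
  set bad := Finset.univ.filter
    (fun ω : Fin L → Bool => ¬ IsSparse 3 n L (coordLoop h (extBits ω))) with hbad
  set good := Finset.univ.filter
    (fun ω : Fin L → Bool => IsSparse 3 n L (coordLoop h (extBits ω))) with hgood
  have hNat : Nat.card {ω : Fin L → Bool // IsSparse 3 n L (coordLoop h (extBits ω))}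
      = good.card := by
    rw [Nat.card_eq_fintype_card, hgood, Fintype.card_subtype]
  have hcardΩ : Fintype.card (Fin L → Bool) = 2 ^ L := by
    rw [Fintype.card_fun]; norm_num
  have hsplit : good.card + bad.card = 2 ^ L := by
    rw [hgood, hbad, ← hcardΩ, ← Finset.card_univ]
    exact Finset.card_filter_add_card_filter_not _
  have hterm : ∀ (v : Fin n → Bool) (k r : ℕ), k < n →
      ((Finset.univ.filter (fun ω : Fin L → Bool =>
        n + L / 2 ^ (n - k) + 1 ≤
          ((((Finset.range L).filter (fun t => n ≤ t ∧ t % n = r)).filter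
            (fun t => ∀ j ∈ winA n r k, coordLoop h (extBits ω) t j = v j)).card))).card : ℝ)
        * 4 ^ n ≤ 2 ^ L := by
    intro v k r hk
    set m := n + L / 2 ^ (n - k) + 1 with hm
    set M := ((Finset.range L).filter (fun t => n ≤ t ∧ t % n = r)).card with hM
    have hNatB := classBound (n := n) (L := L) (k := k) (r := r) (m := m) hn0 hk h v
    have hd : 0 < 2 ^ (n - k) := Nat.pow_pos (by norm_num)
    have h12 : 12 * M ≤ m * 2 ^ (n - k) := by
      have hM1 : M ≤ L / n := CT_card_le hn0
      have hM2 : 12 * M ≤ 12 * (L / n) := Nat.mul_le_mul_left _ hM1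
      have hM3 : 12 * (L / n) ≤ (L / n) * n := by
        calc 12 * (L / n) = (L / n) * 12 := Nat.mul_comm _ _
          _ ≤ (L / n) * n := Nat.mul_le_mul_left _ hn
      have hM4 : (L / n) * n ≤ L := Nat.div_mul_le_self L n
      have hL1 : L < (L / 2 ^ (n - k) + 1) * 2 ^ (n - k) := by
        have e1 := Nat.div_add_mod L (2 ^ (n - k))
        have e2 : L % 2 ^ (n - k) < 2 ^ (n - k) := Nat.mod_lt _ hd
        calc L = 2 ^ (n - k) * (L / 2 ^ (n - k)) + L % 2 ^ (n - k) := e1.symm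
          _ < 2 ^ (n - k) * (L / 2 ^ (n - k)) + 2 ^ (n - k) := by omega
          _ = (L / 2 ^ (n - k) + 1) * 2 ^ (n - k) := by ring
      have hL2 : (L / 2 ^ (n - k) + 1) * 2 ^ (n - k) ≤ m * 2 ^ (n - k) :=
        Nat.mul_le_mul_right _ (by rw [hm]; omega)
      calc 12 * M ≤ 12 * (L / n) := hM2
        _ ≤ (L / n) * n := hM3
        _ ≤ L := hM4
        _ ≤ (L / 2 ^ (n - k) + 1) * 2 ^ (n - k) := le_of_lt hL1
        _ ≤ m * 2 ^ (n - k) := hL2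
    have hnm : n ≤ m := by
      rw [hm]; exact le_trans (Nat.le_add_right n (L / 2 ^ (n - k))) (Nat.le_succ _)
    have hm0 : 0 < m := by rw [hm]; exact Nat.succ_pos _
    have hchB := choose_bound (M := M) (m := m) (n := n) (k := k) hnm hm0 h12
    have hA : ((Finset.univ.filter (fun ω : Fin L → Bool =>
        m ≤ ((((Finset.range L).filter (fun t => n ≤ t ∧ t % n = r)).filter
          (fun t => ∀ j ∈ winA n r k, coordLoop h (extBits ω) t j = v j)).card))).card : ℝ)
        * 2 ^ (m * (n - k)) ≤ (M.choose m : ℝ) * 2 ^ L := by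
      exact_mod_cast hNatB
    have h2mk : (0 : ℝ) < 2 ^ (m * (n - k)) := by positivity
    set c0 : ℝ := ((Finset.univ.filter (fun ω : Fin L → Bool =>
        m ≤ ((((Finset.range L).filter (fun t => n ≤ t ∧ t % n = r)).filter
          (fun t => ∀ j ∈ winA n r k, coordLoop h (extBits ω) t j = v j)).card))).card : ℝ)
      with hc0
    have hchain : c0 * 4 ^ n * 2 ^ (m * (n - k)) ≤ 2 ^ L * 2 ^ (m * (n - k)) := by
      calc c0 * 4 ^ n * 2 ^ (m * (n - k)) = (c0 * 2 ^ (m * (n - k))) * 4 ^ n := by ring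
        _ ≤ ((M.choose m : ℝ) * 2 ^ L) * 4 ^ n := by
            apply mul_le_mul_of_nonneg_right hA (by positivity)
        _ = ((M.choose m : ℝ) * 4 ^ n) * 2 ^ L := by ring
        _ ≤ 2 ^ (m * (n - k)) * 2 ^ L := by
            apply mul_le_mul_of_nonneg_right hchB (by positivity)
        _ = 2 ^ L * 2 ^ (m * (n - k)) := by ring
    exact le_of_mul_le_mul_right hchain h2mk
  have hsubbad : bad ⊆ Finset.univ.biUnion (fun v : Fin n → Bool =>
      (Finset.range n).biUnion (fun k => (Finset.range n).biUnion (fun r =>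
        Finset.univ.filter (fun ω : Fin L → Bool =>
          n + L / 2 ^ (n - k) + 1 ≤
            ((((Finset.range L).filter (fun t => n ≤ t ∧ t % n = r)).filter
              (fun t => ∀ j ∈ winA n r k, coordLoop h (extBits ω) t j = v j)).card))))) := by
    intro ω hω
    rw [hbad, Finset.mem_filter] at hω
    obtain ⟨v, k, hk, r, hr, hle⟩ := reduction hn h ω hω.2
    exact Finset.mem_biUnion.2 ⟨v, Finset.mem_univ _, Finset.mem_biUnion.2
      ⟨k, Finset.mem_range.2 hk, Finset.mem_biUnion.2
        ⟨r, Finset.mem_range.2 hr, Finset.mem_filter.2 ⟨Finset.mem_univ _, hle⟩⟩⟩⟩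
  have hbadNat : bad.card ≤ ∑ v : Fin n → Bool, ∑ k ∈ Finset.range n, ∑ r ∈ Finset.range n,
      (Finset.univ.filter (fun ω : Fin L → Bool =>
        n + L / 2 ^ (n - k) + 1 ≤
          ((((Finset.range L).filter (fun t => n ≤ t ∧ t % n = r)).filter
            (fun t => ∀ j ∈ winA n r k, coordLoop h (extBits ω) t j = v j)).card))).card := by
    calc bad.card ≤ _ := Finset.card_le_card hsubbad
      _ ≤ _ := Finset.card_biUnion_le
      _ ≤ _ := Finset.sum_le_sum (fun v _ =>
          (Finset.card_biUnion_le).trans (Finset.sum_le_sum (fun k _ =>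
            Finset.card_biUnion_le)))
  have hbadR : (bad.card : ℝ) * 4 ^ n ≤ 2 ^ n * ((n : ℝ) * ((n : ℝ) * 2 ^ L)) := by
    have hcast : (bad.card : ℝ) ≤ ∑ v : Fin n → Bool, ∑ k ∈ Finset.range n,
        ∑ r ∈ Finset.range n,
        ((Finset.univ.filter (fun ω : Fin L → Bool =>
          n + L / 2 ^ (n - k) + 1 ≤
            ((((Finset.range L).filter (fun t => n ≤ t ∧ t % n = r)).filter
              (fun t => ∀ j ∈ winA n r k, coordLoop h (extBits ω) t j = v j)).card))).card : ℝ) := by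
      exact_mod_cast hbadNat
    have h4n : (0 : ℝ) < 4 ^ n := by positivity
    calc (bad.card : ℝ) * 4 ^ n
        ≤ (∑ v : Fin n → Bool, ∑ k ∈ Finset.range n, ∑ r ∈ Finset.range n,
          ((Finset.univ.filter (fun ω : Fin L → Bool =>
            n + L / 2 ^ (n - k) + 1 ≤
              ((((Finset.range L).filter (fun t => n ≤ t ∧ t % n = r)).filter
                (fun t => ∀ j ∈ winA n r k, coordLoop h (extBits ω) t j = v j)).card))).card : ℝ))
          * 4 ^ n := by
          apply mul_le_mul_of_nonneg_right hcast (le_of_lt h4n)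
      _ = ∑ v : Fin n → Bool, ∑ k ∈ Finset.range n, ∑ r ∈ Finset.range n,
          ((Finset.univ.filter (fun ω : Fin L → Bool =>
            n + L / 2 ^ (n - k) + 1 ≤
              ((((Finset.range L).filter (fun t => n ≤ t ∧ t % n = r)).filter
                (fun t => ∀ j ∈ winA n r k, coordLoop h (extBits ω) t j = v j)).card))).card : ℝ)
            * 4 ^ n := by
          rw [Finset.sum_mul]
          refine Finset.sum_congr rfl (fun v _ => ?_)
          rw [Finset.sum_mul]
          refine Finset.sum_congr rfl (fun k _ => ?_)
          rw [Finset.sum_mul]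
      _ ≤ ∑ _v : Fin n → Bool, ∑ k ∈ Finset.range n, ∑ _r ∈ Finset.range n, (2 : ℝ) ^ L := by
          refine Finset.sum_le_sum (fun v _ => Finset.sum_le_sum (fun k hk =>
            Finset.sum_le_sum (fun r _ => ?_)))
          exact hterm v k r (Finset.mem_range.1 hk)
      _ = 2 ^ n * ((n : ℝ) * ((n : ℝ) * 2 ^ L)) := by
          rw [Finset.sum_const, Finset.sum_const, Finset.sum_const, Finset.card_range,
            Finset.card_univ, Fintype.card_fun]
          simp [mul_assoc]
  simp only [unifPr]
  rw [hNat, hcardΩ]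
  have hcast2 : ((2 ^ L : ℕ) : ℝ) = 2 ^ L := by push_cast; ring
  rw [hcast2]
  have h2L : (0 : ℝ) < 2 ^ L := by positivity
  have h2n : (0 : ℝ) < 2 ^ n := by positivity
  have key : (bad.card : ℝ) / 2 ^ L ≤ (n : ℝ) ^ 2 / 2 ^ n := by
    rw [div_le_div_iff₀ h2L h2n]
    have h4 : (4 : ℝ) ^ n = 2 ^ n * 2 ^ n := by rw [← mul_pow]; norm_num
    have h5 : (bad.card : ℝ) * 2 ^ n * 2 ^ n ≤ (n : ℝ) ^ 2 * 2 ^ L * 2 ^ n := by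
      calc (bad.card : ℝ) * 2 ^ n * 2 ^ n = (bad.card : ℝ) * 4 ^ n := by rw [h4]; ring
        _ ≤ 2 ^ n * ((n : ℝ) * ((n : ℝ) * 2 ^ L)) := hbadR
        _ = (n : ℝ) ^ 2 * 2 ^ L * 2 ^ n := by ring
    exact le_of_mul_le_mul_right h5 h2n
  have hgoodR : (good.card : ℝ) = 2 ^ L - bad.card := by
    have : (good.card : ℝ) + bad.card = 2 ^ L := by exact_mod_cast hsplit
    linarith
  rw [hgoodR]
  have hx : ((2 : ℝ) ^ L - bad.card) / 2 ^ L = 1 - bad.card / 2 ^ L := by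
    field_simp
  rw [hx]
  linarith
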